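/- Let G be an abelian p-group and x ∈ G with ⟨x⟩ ∩ G¹ = 0. Then every monomorphism f: ⟨x⟩ → G extends to an endomorphism of G if and only if for every y ∈ G with exp(y) = exp(x), the Ulm sequence of x is componentwise ≤ the Ulm sequence of y. -/

import Mathlib

open AddSubgroup

/-- The `p`-height of an element, as an extended natural number. -/
noncomputable def pHeight (p : ℕ) {G : Type*} [AddCommGroup G] (x : G) : ℕ∞ :=
  sSup {n : ℕ∞ | ∃ m : ℕ, n = (m : ℕ∞) ∧ ∃ y : G, p ^ m • y = x}

/-- `G` is an abelian `p`-group. -/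
def IsPGrp (p : ℕ) (G : Type*) [AddCommGroup G] : Prop :=
  ∀ x : G, ∃ n : ℕ, p ^ n • x = 0

/-- `H ∈ Q(G)`: every homomorphism `H → G` extends to an endomorphism of `G`. -/
def InQ {G : Type*} [AddCommGroup G] (H : AddSubgroup G) : Prop :=
  ∀ f : H →+ G, ∃ g : G →+ G, ∀ x : H, g x = f x

/-- `H ∈ P(G)`: every monomorphism `H → G` extends to an endomorphism of `G`. -/
def InP {G : Type*} [AddCommGroup G] (H : AddSubgroup G) : Prop :=
  ∀ f : H →+ G, Function.Injective f → ∃ g : G →+ G, ∀ x : H, g x = f x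

/-- `H ∈ W(G)`: every endomorphism of `H` extends to an endomorphism of `G`. -/
def InW {G : Type*} [AddCommGroup G] (H : AddSubgroup G) : Prop :=
  ∀ f : H →+ H, ∃ g : G →+ G, ∀ x : H, g x = (f x : G)

/-- `K` is an internal direct sum of cyclic subgroups. -/
def IsDirectSumOfCyclics {G : Type*} [AddCommGroup G] (K : AddSubgroup G) : Prop :=
  ∃ (ι : Type) (a : ι → G), (∀ i, a i ∈ K) ∧ (⨆ i, zmultiples (a i)) = K ∧
    iSupIndep (fun i => zmultiples (a i))

/-- `K` is a `p`-pure subgroup: `pⁿG ∩ K = pⁿK`. -/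
def IsPure (p : ℕ) {G : Type*} [AddCommGroup G] (K : AddSubgroup G) : Prop :=
  ∀ n : ℕ, ∀ x ∈ K, (∃ y : G, p ^ n • y = x) → ∃ z ∈ K, p ^ n • z = x

/-- The quotient `G/K` is divisible (equivalently `G = K + pG`). -/
def QuotDivisible (p : ℕ) {G : Type*} [AddCommGroup G] (K : AddSubgroup G) : Prop :=
  ∀ x : G, ∃ y : G, x - p • y ∈ K

/-- The Ulm sequence of `x` has a gap before index `k` (with `h₋₁ = -1`). -/
def HasGapBefore (p : ℕ) {G : Type*} [AddCommGroup G] (x : G) (k : ℕ) : Prop :=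
  if k = 0 then 0 < pHeight p x
  else pHeight p (p ^ (k - 1) • x) + 1 < pHeight p (p ^ k • x)


section DvBasics

variable {G : Type*} [AddCommGroup G] {p : ℕ}

/-- divisibility by `p ^ m` in `G` -/
def Dv (p : ℕ) {G : Type*} [AddCommGroup G] (m : ℕ) (z : G) : Prop :=
  ∃ y : G, p ^ m • y = z

theorem dv_zero (m : ℕ) : Dv p m (0 : G) := ⟨0, smul_zero _⟩

theorem dv_self (z : G) : Dv p 0 z := ⟨z, by simp⟩

theorem dv_mono {m m' : ℕ} (h : m' ≤ m) {z : G} : Dv p m z → Dv p m' z := by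
  rintro ⟨y, rfl⟩
  exact ⟨p ^ (m - m') • y, by rw [smul_smul, ← pow_add]; congr 2; omega⟩

theorem dv_add {m : ℕ} {a b : G} : Dv p m a → Dv p m b → Dv p m (a + b) := by
  rintro ⟨y, rfl⟩ ⟨y', rfl⟩; exact ⟨y + y', smul_add _ _ _⟩

theorem dv_neg {m : ℕ} {a : G} : Dv p m a → Dv p m (-a) := by
  rintro ⟨y, rfl⟩; exact ⟨-y, smul_neg _ _⟩

theorem dv_sub {m : ℕ} {a b : G} (ha : Dv p m a) (hb : Dv p m b) : Dv p m (a - b) := by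
  rw [sub_eq_add_neg]; exact dv_add ha (dv_neg hb)

theorem dv_zsmul {m : ℕ} (k : ℤ) {a : G} : Dv p m a → Dv p m (k • a) := by
  rintro ⟨y, rfl⟩; exact ⟨k • y, smul_comm _ _ _⟩

theorem dv_nsmul {m : ℕ} (k : ℕ) {a : G} : Dv p m a → Dv p m (k • a) := by
  rintro ⟨y, rfl⟩; exact ⟨k • y, smul_comm _ _ _⟩

theorem dv_pow_smul {m : ℕ} (j : ℕ) {z : G} : Dv p m z → Dv p (j + m) (p ^ j • z) := by
  rintro ⟨y, rfl⟩; exact ⟨y, by rw [smul_smul, ← pow_add]⟩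

theorem dv_map {G' : Type*} [AddCommGroup G'] (f : G →+ G') {m : ℕ} {z : G} :
    Dv p m z → Dv p m (f z) := by
  rintro ⟨y, rfl⟩; exact ⟨f y, by rw [← map_nsmul]⟩

theorem le_pHeight_iff {m : ℕ} {z : G} : (m : ℕ∞) ≤ pHeight p z ↔ Dv p m z := by
  constructor
  · intro h
    by_contra hdv
    rcases Nat.eq_zero_or_pos m with rfl | hm
    · exact hdv (dv_self z)
    have hb : pHeight p z ≤ ((m - 1 : ℕ) : ℕ∞) := by
      apply sSup_le
      rintro s ⟨m', rfl, y, hy⟩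
      have hlt : m' < m := by
        by_contra h'
        push_neg at h'
        exact hdv (dv_mono h' ⟨y, hy⟩)
      exact_mod_cast Nat.le_sub_one_of_lt hlt
    have h2 := h.trans hb
    have h3 : m ≤ m - 1 := by exact_mod_cast h2
    omega
  · rintro ⟨y, hy⟩
    exact le_sSup ⟨m, rfl, y, hy⟩

theorem pHeight_le_of_dv {z z' : G} (h : ∀ m, Dv p m z → Dv p m z') :
    pHeight p z ≤ pHeight p z' := by
  apply sSup_le
  rintro s ⟨m, rfl, y, hy⟩
  exact le_pHeight_iff.mpr (h m ⟨y, hy⟩)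

theorem dv_of_pHeight_le {z z' : G} (h : pHeight p z ≤ pHeight p z') {m : ℕ}
    (hd : Dv p m z) : Dv p m z' :=
  le_pHeight_iff.mp ((le_pHeight_iff.mpr hd).trans h)

end DvBasics

section IntLemmas

theorem int_pdecomp {p : ℕ} (hp : 2 ≤ p) (k : ℤ) (hk : k ≠ 0) :
    ∃ (i : ℕ) (t : ℤ), ¬ ((p : ℤ) ∣ t) ∧ k = (p : ℤ) ^ i * t := by
  obtain ⟨n, hn⟩ : ∃ n, k.natAbs ≤ n := ⟨k.natAbs, le_rfl⟩
  induction n generalizing k with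
  | zero =>
    exact absurd (Int.natAbs_eq_zero.mp (Nat.le_zero.mp hn)) hk
  | succ n ih =>
    by_cases hd : (p : ℤ) ∣ k
    · obtain ⟨k', rfl⟩ := hd
      have hk' : k' ≠ 0 := by rintro rfl; simp at hk
      have hlt : k'.natAbs ≤ n := by
        rw [Int.natAbs_mul] at hn
        have h1 : 1 ≤ k'.natAbs := Int.natAbs_pos.mpr hk'
        have h2 : (p : ℤ).natAbs = p := Int.natAbs_natCast p
        nlinarith
      obtain ⟨i, t, ht, rfl⟩ := ih k' hk' hlt
      exact ⟨i + 1, t, ht, by ring⟩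
    · exact ⟨0, k, hd, by ring⟩

theorem exists_int_inverse {p : ℕ} (hp : p.Prime) {t : ℤ} (ht : ¬ ((p : ℤ) ∣ t)) (B : ℕ) :
    ∃ t' : ℤ, ((p : ℤ) ^ B) ∣ (t * t' - 1) := by
  have hcop : IsCoprime (t : ℤ) ((p : ℤ) ^ B) := by
    apply IsCoprime.pow_right
    rw [Int.isCoprime_iff_gcd_eq_one]
    have hnd : ¬ (p ∣ t.natAbs) := fun h => ht (Int.natCast_dvd.mpr h)
    have hcp : Nat.Coprime p t.natAbs := (Nat.Prime.coprime_iff_not_dvd hp).mpr hnd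
    have : Nat.gcd t.natAbs p = 1 := Nat.coprime_comm.mp hcp
    simpa [Int.gcd] using this
  obtain ⟨a, b, hab⟩ := hcop
  exact ⟨a, ⟨-b, by linarith⟩⟩

theorem zsmul_eq_zero_of_dvd {G : Type*} [AddCommGroup G] {p : ℕ} {z : G} {E : ℕ}
    (hz : p ^ E • z = 0) {k : ℤ} (hk : ((p : ℤ) ^ E) ∣ k) : k • z = 0 := by
  obtain ⟨c, rfl⟩ := hk
  have hz' : ((p : ℤ) ^ E) • z = 0 := by
    rw [← natCast_zsmul] at hz; simpa using hz
  rw [mul_comm, mul_smul, hz', smul_zero]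

theorem dv_unit_smul {G : Type*} [AddCommGroup G] {p : ℕ} (hp : p.Prime) {z : G} {E : ℕ}
    (hz : p ^ E • z = 0) {t : ℤ} (ht : ¬ ((p : ℤ) ∣ t)) {j : ℕ}
    (h : Dv p j (t • z)) : Dv p j z := by
  obtain ⟨t', ht'⟩ := exists_int_inverse hp ht E
  have h2 : t' • (t • z) = z := by
    rw [smul_smul]
    have h3 : (t' * t) • z = (t' * t - 1) • z + z := by
      rw [sub_smul, one_smul, sub_add_cancel]
    have h4 : (t' * t - 1) • z = 0 :=
      zsmul_eq_zero_of_dvd hz (by rw [mul_comm]; exact ht')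
    rw [h3, h4, zero_add]
  have := dv_zsmul t' h
  rwa [h2] at this

end IntLemmas
section ZModLemmas

variable {p e : ℕ}

theorem zmod_pow_e_eq_zero (p e : ℕ) : (p : ZMod (p ^ e)) ^ e = 0 := by
  rw [← Nat.cast_pow, ZMod.natCast_self]

theorem zmod_eq_zero_of_pow_dvd {η : ZMod (p ^ e)} (h : (p : ZMod (p ^ e)) ^ e ∣ η) : η = 0 := by
  obtain ⟨c, rfl⟩ := h
  rw [zmod_pow_e_eq_zero, zero_mul]

theorem zmod_ker_pow (hp : 1 ≤ p) (he : 1 ≤ e) {s : ℕ} (hs : s ≤ e) {η : ZMod (p ^ e)}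
    (h : (p : ZMod (p ^ e)) ^ s * η = 0) : (p : ZMod (p ^ e)) ^ (e - s) ∣ η := by
  haveI : NeZero (p ^ e) := ⟨pow_ne_zero e (by omega)⟩
  have hval : ((η.val : ℕ) : ZMod (p ^ e)) = η := by
    rw [ZMod.natCast_val, ZMod.cast_id]
  rw [← hval, ← Nat.cast_pow, ← Nat.cast_mul] at h
  rw [ZMod.natCast_eq_zero_iff] at h
  have hdvd : p ^ (e - s) ∣ η.val := by
    have h2 : p ^ s * p ^ (e - s) ∣ p ^ s * η.val := by
      rw [← pow_add]
      have : s + (e - s) = e := by omega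
      rw [this]; exact h
    exact (mul_dvd_mul_iff_left (a := p ^ s) (pow_ne_zero s (by omega))).mp h2
  obtain ⟨c, hc⟩ := hdvd
  refine ⟨(c : ZMod (p ^ e)), ?_⟩
  rw [← hval, hc]
  push_cast
  ring

end ZModLemmas
section LemD

variable {G : Type*} [AddCommGroup G] {p : ℕ}

theorem lemD (hp : p.Prime) (hG : IsPGrp p G) (u : G) (e : ℕ) (he : 1 ≤ e)
    (hex : ∀ m < e, ¬ Dv p (m + 1) (p ^ m • u)) (hord : p ^ e • u = 0) :
    ∃ π : G →+ ZMod (p ^ e), π u = 1 := by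
  classical
  set M := p ^ e with hM
  set 𝒮 : Set (AddSubgroup (G × ZMod M)) :=
    {S | (u, (1 : ZMod M)) ∈ S ∧
      ∀ q ∈ S, ∀ j : ℕ, Dv p j q.1 → (p : ZMod M) ^ j ∣ q.2} with h𝒮
  have hppos : 1 ≤ p := hp.two_le.trans' (by omega)
  have hS0 : zmultiples ((u, (1 : ZMod M)) : G × ZMod M) ∈ 𝒮 := by
    constructor
    · exact mem_zmultiples _
    · rintro q hq j hDj
      obtain ⟨k, rfl⟩ := mem_zmultiples_iff.mp hq
      have hfst : (k • ((u, (1 : ZMod M)) : G × ZMod M)).1 = k • u := rfl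
      have hsnd : (k • ((u, (1 : ZMod M)) : G × ZMod M)).2 = ((k : ℤ) : ZMod M) := by
        show k • (1 : ZMod M) = _
        rw [zsmul_eq_mul, mul_one]
      rw [hsnd]
      rw [hfst] at hDj
      by_cases hk0 : ((k : ℤ) : ZMod M) = 0
      · rw [hk0]; exact dvd_zero _
      have hk : k ≠ 0 := by rintro rfl; simp at hk0
      obtain ⟨i, t, ht, rfl⟩ := int_pdecomp hp.two_le k hk
      by_cases hie : e ≤ i
      · exfalso
        apply hk0
        push_cast
        have h1 : (p : ZMod M) ^ i = 0 := by
          have h2 : (p : ZMod M) ^ i = (p : ZMod M) ^ e * (p : ZMod M) ^ (i - e) := by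
            rw [← pow_add]; congr 1; omega
          rw [h2, zmod_pow_e_eq_zero, zero_mul]
        rw [h1, zero_mul]
      push_neg at hie
      have hji : j ≤ i := by
        by_contra hji
        push_neg at hji
        have hD1 : Dv p (i + 1) (((p : ℤ) ^ i * t) • u) := dv_mono hji hDj
        have hrw : ((p : ℤ) ^ i * t) • u = t • ((p ^ i : ℕ) • u) := by
          rw [← natCast_zsmul, smul_smul, mul_comm]
          push_cast
          ring_nf
        rw [hrw] at hD1
        have hz : p ^ e • ((p ^ i : ℕ) • u) = 0 := by
          rw [smul_comm, hord, smul_zero]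
        exact hex i hie (dv_unit_smul hp hz ht hD1)
      refine ⟨(p : ZMod M) ^ (i - j) * (t : ZMod M), ?_⟩
      push_cast
      rw [← mul_assoc, ← pow_add]
      congr 2
      omega
  obtain ⟨S, hle0, hSin, hSmax⟩ := zorn_le_nonempty₀ 𝒮
    (fun c hc hchain y hy => by
      refine ⟨sSup c, ⟨?_, ?_⟩, fun z hz => le_sSup hz⟩
      · exact (le_sSup hy : y ≤ sSup c) (hc hy).1
      · intro q hq j hDj
        rw [AddSubgroup.mem_sSup_of_directedOn ⟨y, hy⟩ hchain.directedOn] at hq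
        obtain ⟨s, hs, hqs⟩ := hq
        exact (hc hs).2 q hqs j hDj)
    _ hS0
  have huS : ((u, (1 : ZMod M)) : G × ZMod M) ∈ S := hSin.1
  have hinv : ∀ q ∈ S, ∀ j : ℕ, Dv p j q.1 → (p : ZMod M) ^ j ∣ q.2 := hSin.2
  have tot : ∀ z : G, ∃ ξ : ZMod M, ((z, ξ) : G × ZMod M) ∈ S := by
    by_contra hzc
    push_neg at hzc
    obtain ⟨z, hz⟩ := hzc
    have hexists : ∃ i : ℕ, ∃ ξ : ZMod M, ((p ^ i • z, ξ) : G × ZMod M) ∈ S := by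
      obtain ⟨E, hE⟩ := hG z
      exact ⟨E, 0, by rw [hE]; exact S.zero_mem⟩
    set m := Nat.find hexists with hm
    obtain ⟨ξa, hξa⟩ := Nat.find_spec hexists
    rw [← hm] at hξa
    have hmin : ∀ i < m, ∀ ξ : ZMod M, ((p ^ i • z, ξ) : G × ZMod M) ∉ S :=
      fun i hi ξ h => Nat.find_min hexists hi ⟨ξ, h⟩
    have hm0 : 0 < m := by
      rcases Nat.eq_zero_or_pos m with h0 | h
      · exfalso
        rw [h0, pow_zero, one_smul] at hξa
        exact hz ξa hξa
      · exact h
    set P : ℕ → Prop := fun d => ∃ (b : G) (ξ : ZMod M) (i j : ℕ),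
      ((b, ξ) : G × ZMod M) ∈ S ∧ i ≤ m ∧ j ≤ e ∧ Dv p j (b + p ^ i • z) ∧ j = i + d with hP
    have hP0 : P 0 := by
      refine ⟨0, 0, 0, 0, S.zero_mem, Nat.zero_le _, Nat.zero_le _, ?_, rfl⟩
      exact dv_self _
    have hPbd : ∀ d, P d → d ≤ e := by
      rintro d ⟨b, ξ, i, j, _, _, hje, _, hEq⟩; omega
    set dm := Nat.findGreatest P e with hdm
    have hPd : P dm := Nat.findGreatest_spec (Nat.zero_le e) hP0
    have hmaxd : ∀ d, P d → d ≤ dm := fun d hd => Nat.le_findGreatest (hPbd d hd) hd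
    obtain ⟨bs, ξs, is, js, hbS, him, hje, hDst, hEq⟩ := hPd
    have hii : is ≤ js := by omega
    have hDb : Dv p is bs := by
      have h1 : bs = (bs + p ^ is • z) - p ^ is • z := by abel
      rw [h1]
      exact dv_sub (dv_mono hii hDst) ⟨z, rfl⟩
    obtain ⟨β, hβ0⟩ := hinv _ hbS is hDb
    have hβ : ξs = (p : ZMod M) ^ is * β := hβ0
    have CLAIM : ∀ (b : G) (ξ : ZMod M), ((b, ξ) : G × ZMod M) ∈ S →
        ∀ i ≤ m, ∀ j ≤ e, Dv p j (b + p ^ i • z) →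
        (p : ZMod M) ^ j ∣ ξ - (p : ZMod M) ^ i * β := by
      intro b ξ hbξ i him' j hje' hD
      by_cases hji : j ≤ i
      · have h1 : Dv p j b := by
          have h2 : b = (b + p ^ i • z) - p ^ i • z := by abel
          rw [h2]
          refine dv_sub hD ⟨p ^ (i - j) • z, ?_⟩
          rw [smul_smul, ← pow_add]
          congr 2; omega
        refine dvd_sub (hinv _ hbξ j h1) ⟨(p : ZMod M) ^ (i - j) * β, ?_⟩
        rw [← mul_assoc, ← pow_add]
        congr 2; omega
      · push_neg at hji
        have hdd : j - i ≤ dm := hmaxd (j - i) ⟨b, ξ, i, j, hbξ, him', hje', hD, by omega⟩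
        by_cases hii' : is ≤ i
        · have hmem2 : ((b - p ^ (i - is) • bs, ξ - (p : ZMod M) ^ (i - is) * ξs) : G × ZMod M)
              ∈ S := by
            have h3 := S.sub_mem hbξ (S.nsmul_mem hbS (p ^ (i - is)))
            have h4 : (p ^ (i - is)) • ((bs, ξs) : G × ZMod M)
                = ((p ^ (i - is) • bs, (p : ZMod M) ^ (i - is) * ξs) : G × ZMod M) := by
              have hc : (p ^ (i - is)) • ξs = (p : ZMod M) ^ (i - is) * ξs := by
                rw [nsmul_eq_mul]; push_cast; ring
              exact Prod.ext rfl hc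
            rwa [h4] at h3
          have hDq : Dv p j (b - p ^ (i - is) • bs) := by
            have key : b - p ^ (i - is) • bs
                = (b + p ^ i • z) - p ^ (i - is) • (bs + p ^ is • z) := by
              rw [smul_add, smul_smul, ← pow_add]
              have h5 : i - is + is = i := by omega
              rw [h5]
              abel
            rw [key]
            refine dv_sub hD (dv_mono ?_ (dv_pow_smul (i - is) hDst))
            omega
          have h5 := hinv _ hmem2 j hDq
          have h6 : ξ - (p : ZMod M) ^ (i - is) * ξs = ξ - (p : ZMod M) ^ i * β := by
            rw [hβ, ← mul_assoc, ← pow_add]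
            have h7 : i - is + is = i := by omega
            rw [h7]
          rwa [h6] at h5
        · push_neg at hii'
          have hmem2 : ((p ^ (is - i) • b - bs, (p : ZMod M) ^ (is - i) * ξ - ξs) : G × ZMod M)
              ∈ S := by
            have h3 := S.sub_mem (S.nsmul_mem hbξ (p ^ (is - i))) hbS
            have h4 : (p ^ (is - i)) • ((b, ξ) : G × ZMod M)
                = ((p ^ (is - i) • b, (p : ZMod M) ^ (is - i) * ξ) : G × ZMod M) := by
              have hc : (p ^ (is - i)) • ξ = (p : ZMod M) ^ (is - i) * ξ := by
                rw [nsmul_eq_mul]; push_cast; ring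
              exact Prod.ext rfl hc
            rwa [h4] at h3
          have hDq : Dv p ((is - i) + j) (p ^ (is - i) • b - bs) := by
            have key : p ^ (is - i) • b - bs
                = p ^ (is - i) • (b + p ^ i • z) - (bs + p ^ is • z) := by
              rw [smul_add, smul_smul, ← pow_add]
              have h5 : is - i + i = is := by omega
              rw [h5]
              abel
            rw [key]
            refine dv_sub (dv_pow_smul (is - i) hD) (dv_mono ?_ hDst)
            omega
          have h5 := hinv _ hmem2 ((is - i) + j) hDq
          have h6 : (p : ZMod M) ^ (is - i) * ξ - ξs
              = (p : ZMod M) ^ (is - i) * (ξ - (p : ZMod M) ^ i * β) := by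
            rw [hβ, mul_sub]
            congr 1
            rw [← mul_assoc, ← pow_add]
            have h7 : is - i + i = is := by omega
            rw [h7]
          rw [h6] at h5
          obtain ⟨c, hc0⟩ := h5
          have hc2 : (p : ZMod M) ^ (is - i) * (ξ - (p : ZMod M) ^ i * β)
              = (p : ZMod M) ^ (is - i + j) * c := hc0
          have h7 : (p : ZMod M) ^ (is - i)
              * ((ξ - (p : ZMod M) ^ i * β) - (p : ZMod M) ^ j * c) = 0 := by
            rw [mul_sub, hc2, ← mul_assoc, ← pow_add, sub_self]
          have h8 := zmod_ker_pow hppos he (by omega : is - i ≤ e) h7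
          obtain ⟨c', hc'⟩ := h8
          have h9 : ξ - (p : ZMod M) ^ i * β
              = (p : ZMod M) ^ j * c + (p : ZMod M) ^ (e - (is - i)) * c' := by
            rw [← hc']; abel
          rw [h9]
          refine ⟨c + (p : ZMod M) ^ (e - (is - i) - j) * c', ?_⟩
          rw [mul_add]
          congr 1
          rw [← mul_assoc, ← pow_add]
          congr 2
          omega
    set w : ZMod M := -β with hw
    have hwm : (p : ZMod M) ^ m * w = ξa := by
      have h1 : ((-(p ^ m • z), -ξa) : G × ZMod M) ∈ S := S.neg_mem hξa
      have h2 : Dv p e ((-(p ^ m • z)) + p ^ m • z) := by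
        rw [neg_add_cancel]; exact dv_zero e
      have h3 : (p : ZMod M) ^ e ∣ (-ξa - (p : ZMod M) ^ m * β) :=
        CLAIM _ _ h1 m le_rfl e le_rfl h2
      have h4 := zmod_eq_zero_of_pow_dvd h3
      have h5 : -ξa = (p : ZMod M) ^ m * β := sub_eq_zero.mp h4
      rw [hw, mul_neg, ← h5, neg_neg]
    -- build the bigger subgroup
    have hS'in : S ⊔ zmultiples ((z, w) : G × ZMod M) ∈ 𝒮 := by
      constructor
      · exact (le_sup_left : S ≤ _) huS
      · rintro q hq j hDj
        rw [AddSubgroup.mem_sup] at hq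
        obtain ⟨q₁, hq₁, q₂, hq₂, rfl⟩ := hq
        obtain ⟨k, rfl⟩ := mem_zmultiples_iff.mp hq₂
        have hfst : (q₁ + k • ((z, w) : G × ZMod M)).1 = q₁.1 + k • z := rfl
        have hsnd : (q₁ + k • ((z, w) : G × ZMod M)).2 = q₁.2 + k • w := rfl
        rw [hsnd]
        rw [hfst] at hDj
        suffices hsuff : ∀ j' ≤ e, Dv p j' (q₁.1 + k • z) → (p : ZMod M) ^ j' ∣ q₁.2 + k • w by
          by_cases hje2 : j ≤ e
          · exact hsuff j hje2 hDj
          · push_neg at hje2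
            have h0 := hsuff e le_rfl (dv_mono hje2.le hDj)
            rw [zmod_eq_zero_of_pow_dvd h0]
            exact dvd_zero _
        intro j' hj'e hDj'
        rcases eq_or_ne k 0 with rfl | hk0
        · simp only [zero_smul, add_zero] at hDj' ⊢
          exact hinv _ hq₁ j' hDj'
        obtain ⟨i, t, ht, rfl⟩ := int_pdecomp hp.two_le k hk0
        obtain ⟨E, hE⟩ := hG z
        by_cases him2 : m ≤ i
        · -- the pair ((p^i t) • z, (p^i t) • w) already belongs to S
          have hmemk := S.zsmul_mem hξa ((p : ℤ) ^ (i - m) * t)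
          have hpair : ((p : ℤ) ^ (i - m) * t) • ((p ^ m • z, ξa) : G × ZMod M)
              = ((((p : ℤ) ^ i * t) • z, ((p : ℤ) ^ i * t) • w) : G × ZMod M) := by
            have hcomp1 : ((p : ℤ) ^ (i - m) * t) • (p ^ m • z) = ((p : ℤ) ^ i * t) • z := by
              rw [← natCast_zsmul, smul_smul]
              congr 1
              push_cast
              rw [mul_right_comm, ← pow_add]
              congr 2
              omega
            have hcomp2 : ((p : ℤ) ^ (i - m) * t) • ξa = ((p : ℤ) ^ i * t) • w := by
              rw [← hwm, zsmul_eq_mul, zsmul_eq_mul]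
              push_cast
              rw [← mul_assoc]
              congr 1
              rw [mul_right_comm, ← pow_add]
              congr 2
              omega
            exact Prod.ext hcomp1 hcomp2
          rw [hpair] at hmemk
          have hmem3 : ((q₁.1 + ((p : ℤ) ^ i * t) • z, q₁.2 + ((p : ℤ) ^ i * t) • w)
              : G × ZMod M) ∈ S := by
            have h3 := S.add_mem hq₁ hmemk
            exact h3
          exact hinv _ hmem3 j' hDj'
        · push_neg at him2
          obtain ⟨t', ht'⟩ := exists_int_inverse hp ht (e + E)
          have hkill : ((p : ℤ) ^ i * (t * t' - 1)) • z = 0 := by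
            apply zsmul_eq_zero_of_dvd hE
            exact Dvd.dvd.mul_left (dvd_trans (pow_dvd_pow _ (by omega : E ≤ e + E)) ht') _
          have hnorm : t' • (q₁.1 + ((p : ℤ) ^ i * t) • z) = t' • q₁.1 + (p ^ i : ℕ) • z := by
            rw [smul_add, smul_smul]
            congr 1
            have harith : t' * ((p : ℤ) ^ i * t) = (p : ℤ) ^ i + (p : ℤ) ^ i * (t * t' - 1) := by
              ring
            rw [harith, add_smul, hkill, add_zero, ← natCast_zsmul]
            congr 1
          have hmemt : ((t' • q₁.1, t' • q₁.2) : G × ZMod M) ∈ S := S.zsmul_mem hq₁ t'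
          have hDnorm : Dv p j' (t' • q₁.1 + (p ^ i : ℕ) • z) := by
            rw [← hnorm]
            exact dv_zsmul t' hDj'
          have happ := CLAIM (t' • q₁.1) (t' • q₁.2) hmemt i (by omega) j' hj'e hDnorm
          have happ2 : (p : ZMod M) ^ j' ∣ (t : ZMod M) * (t' • q₁.2 - (p : ZMod M) ^ i * β) :=
            Dvd.dvd.mul_left happ _
          have hcast : ((t * t' - 1 : ℤ) : ZMod M) = 0 := by
            rw [ZMod.intCast_zmod_eq_zero_iff_dvd]
            have hMc : ((M : ℕ) : ℤ) = (p : ℤ) ^ e := by rw [hM]; push_cast; ring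
            rw [hMc]
            exact dvd_trans (pow_dvd_pow _ (by omega : e ≤ e + E)) ht'
          have hfinal : (t : ZMod M) * (t' • q₁.2 - (p : ZMod M) ^ i * β)
              = q₁.2 + ((p : ℤ) ^ i * t) • w := by
            rw [zsmul_eq_mul, zsmul_eq_mul]
            have hq2 : (t : ZMod M) * ((t' : ZMod M) * q₁.2)
                = q₁.2 + ((t * t' - 1 : ℤ) : ZMod M) * q₁.2 := by
              push_cast
              ring
            rw [mul_sub, hq2, hcast, zero_mul, add_zero]
            rw [hw]
            push_cast
            ring
          rw [hfinal] at happ2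
          exact happ2
    -- contradiction with maximality
    have hle : S ≤ S ⊔ zmultiples ((z, w) : G × ZMod M) := le_sup_left
    have hle2 := hSmax hS'in hle
    have hzw : ((z, w) : G × ZMod M) ∈ S := by
      apply hle2
      exact (le_sup_right : zmultiples ((z, w) : G × ZMod M) ≤ _) (mem_zmultiples _)
    exact hz w hzw
  -- uniqueness of the second coordinate
  have uniq : ∀ (g : G) (ξ ξ' : ZMod M), ((g, ξ) : G × ZMod M) ∈ S →
      ((g, ξ') : G × ZMod M) ∈ S → ξ = ξ' := by
    intro g ξ ξ' h1 h2
    have h3 : ((0, ξ - ξ') : G × ZMod M) ∈ S := by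
      have h4 := S.sub_mem h1 h2
      have h5 : ((g, ξ) : G × ZMod M) - (g, ξ') = ((0, ξ - ξ') : G × ZMod M) := by
        exact Prod.ext (sub_self g) rfl
      rwa [h5] at h4
    have h6 : (p : ZMod M) ^ e ∣ ξ - ξ' := hinv _ h3 e (dv_zero e)
    exact sub_eq_zero.mp (zmod_eq_zero_of_pow_dvd h6)
  -- the homomorphism
  choose χ hχ using tot
  refine ⟨AddMonoidHom.mk' χ ?_, ?_⟩
  · intro a b
    apply uniq (a + b) _ _ (hχ (a + b))
    have := S.add_mem (hχ a) (hχ b)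
    exact this
  · exact uniq u _ _ (hχ u) huS

end LemD
section Build

variable {G : Type*} [AddCommGroup G] {p : ℕ}

theorem findGreatest_zero_or (P : ℕ → Prop) [DecidablePred P] (N : ℕ) :
    Nat.findGreatest P N = 0 ∨ P (Nat.findGreatest P N) := by
  induction N with
  | zero => exact Or.inl rfl
  | succ N ih =>
    rw [Nat.findGreatest_succ]
    by_cases h : P (N + 1)
    · rw [if_pos h]
      exact Or.inr h
    · rw [if_neg h]
      exact ih

theorem smul_congr_zmod {M : ℕ} {v : G} (hv : M • v = 0) {K K' : ℤ}
    (h : (K : ZMod M) = (K' : ZMod M)) : K • v = K' • v := by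
  rw [ZMod.intCast_eq_intCast_iff] at h
  obtain ⟨c, hc⟩ := Int.ModEq.dvd h
  have hMv : (M : ℤ) • v = 0 := by rw [natCast_zsmul]; exact hv
  have h0 : (K' - K) • v = 0 := by
    rw [hc, mul_comm, mul_smul, hMv, smul_zero]
  rw [sub_smul] at h0
  have := sub_eq_zero.mp h0
  exact this.symm

theorem buildHom (hp : p.Prime) (hG : IsPGrp p G) :
    ∀ n : ℕ, ∀ x y : G,
      (∀ k, k < n → ∃ m, ¬ Dv p m (p ^ k • x)) →
      (∀ k, k < n → ∀ m, Dv p m (p ^ k • x) → Dv p m (p ^ k • y)) →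
      p ^ n • y = 0 →
      (∀ c, Dv p c (p ^ (n - 1) • x) → Dv p (c + 2) (p ^ n • x)) →
      ∃ g : G →+ G, g x = y := by
  intro n
  induction n using Nat.strong_induction_on with
  | _ n IH =>
  intro x y Hfin Hle Hy Hx
  rcases Nat.eq_zero_or_pos n with rfl | hn
  · refine ⟨0, ?_⟩
    rw [pow_zero, one_smul] at Hy
    simp [Hy]
  classical
  -- exact heights
  have hfind : ∀ k, k < n → (∃ m, ¬ Dv p m (p ^ k • x)) := Hfin
  set H : ℕ → ℕ := fun k => if h : k < n then Nat.find (hfind k h) - 1 else 0 with hH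
  have hfpos : ∀ k (hk : k < n), 1 ≤ Nat.find (hfind k hk) := by
    intro k hk
    rcases Nat.eq_zero_or_pos (Nat.find (hfind k hk)) with h0 | h
    · exfalso
      have := Nat.find_spec (hfind k hk)
      rw [h0] at this
      exact this (dv_self _)
    · exact h
  have hHdv : ∀ k, k < n → Dv p (H k) (p ^ k • x) := by
    intro k hk
    have h2 : H k = Nat.find (hfind k hk) - 1 := by rw [hH]; simp [hk]
    have h3 : H k < Nat.find (hfind k hk) := by have := hfpos k hk; omega
    exact not_not.mp (Nat.find_min (hfind k hk) h3)
  have hHnot : ∀ k, k < n → ¬ Dv p (H k + 1) (p ^ k • x) := by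
    intro k hk
    have h2 : H k + 1 = Nat.find (hfind k hk) := by
      rw [hH]; simp only [hk, dif_pos]
      have := hfpos k hk; omega
    rw [h2]
    exact Nat.find_spec (hfind k hk)
  have hstep : ∀ k, k + 1 < n → H k + 1 ≤ H (k + 1) := by
    intro k hk
    have hd := hHdv k (by omega)
    have h1 : Dv p (1 + H k) (p ^ 1 • (p ^ k • x)) := dv_pow_smul 1 hd
    have h2 : p ^ 1 • (p ^ k • x) = p ^ (k + 1) • x := by
      rw [smul_smul, ← pow_add]
      congr 2
      omega
    rw [h2] at h1
    by_contra hc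
    push_neg at hc
    exact hHnot (k + 1) hk (dv_mono (by omega) h1)
  have hchain : ∀ k d, k + d < n → H k + d ≤ H (k + d) := by
    intro k d
    induction d with
    | zero => simp
    | succ d ih =>
      intro hlt
      have h1 := ih (by omega)
      have h2 := hstep (k + d) (by omega)
      show H k + (d + 1) ≤ H (k + d + 1)
      omega
  -- last gap position
  set PP : ℕ → Prop := fun k => 1 ≤ k ∧ k ≤ n - 1 ∧ H (k - 1) + 2 ≤ H k with hPP
  set r := Nat.findGreatest PP (n - 1) with hr
  have hrle : r ≤ n - 1 := Nat.findGreatest_le _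
  have hrn : r < n := by omega
  have hPor : r = 0 ∨ PP r := findGreatest_zero_or PP (n - 1)
  have hnogap : ∀ k, r < k → k ≤ n - 1 → H k ≤ H (k - 1) + 1 := by
    intro k h1 h2
    have h3 : ¬ (1 ≤ k ∧ k ≤ n - 1 ∧ H (k - 1) + 2 ≤ H k) :=
      Nat.findGreatest_is_greatest h1 h2
    push_neg at h3
    have h4 := h3 (by omega) h2
    omega
  have hlin : ∀ d, r + d ≤ n - 1 → H (r + d) = H r + d := by
    intro d
    induction d with
    | zero => simp
    | succ d ih =>
      intro hle
      have h1 := ih (by omega)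
      have h2 := hnogap (r + d + 1) (by omega) (by omega)
      have h3 : r + d + 1 - 1 = r + d := by omega
      rw [h3] at h2
      have h4 := hchain (r + d) 1 (by omega)
      show H (r + d + 1) = H r + (d + 1)
      omega
  set e := H r + (n - r) with he_def
  have hHn1 : H (n - 1) = e - 1 := by
    have h1 := hlin (n - 1 - r) (by omega)
    have h2 : r + (n - 1 - r) = n - 1 := by omega
    rw [h2] at h1
    omega
  have he1 : 1 ≤ e := by omega
  obtain ⟨u, hu⟩ := hHdv r hrn
  have hue : p ^ e • u = p ^ n • x := by
    have h1 : p ^ e • u = p ^ (n - r) • (p ^ (H r) • u) := by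
      rw [smul_smul, ← pow_add]
      congr 2
      omega
    rw [h1, hu, smul_smul, ← pow_add]
    congr 2
    omega
  have hexu : ∀ m, m < e → ¬ Dv p (m + 1) (p ^ m • u) := by
    intro m hm hDc
    have h1 : Dv p ((e - 1 - m) + (m + 1)) (p ^ (e - 1 - m) • (p ^ m • u)) := dv_pow_smul _ hDc
    have h2 : p ^ (e - 1 - m) • (p ^ m • u) = p ^ (n - 1) • x := by
      rw [smul_smul, ← pow_add]
      have h3 : e - 1 - m + m = (n - 1 - r) + H r := by omega
      rw [h3, pow_add, mul_smul, hu, smul_smul, ← pow_add]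
      congr 2
      omega
    rw [h2] at h1
    have h4 : Dv p (H (n - 1) + 1) (p ^ (n - 1) • x) := dv_mono (by omega) h1
    exact hHnot (n - 1) (by omega) h4
  have hDn1 : Dv p (e - 1) (p ^ (n - 1) • x) := by
    have := hHdv (n - 1) (by omega)
    rwa [hHn1] at this
  obtain ⟨s, hs⟩ := Hx (e - 1) hDn1
  have hs' : p ^ (e + 1) • s = p ^ n • x := by
    have h1 : e - 1 + 2 = e + 1 := by omega
    rwa [h1] at hs
  set u' := u - p • s with hu'
  have hu'e : p ^ e • u' = 0 := by
    rw [hu', smul_sub, hue]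
    have h1 : p ^ e • (p • s) = p ^ (e + 1) • s := by rw [smul_smul, ← pow_succ]
    rw [h1, hs', sub_self]
  have hexu' : ∀ m, m < e → ¬ Dv p (m + 1) (p ^ m • u') := by
    intro m hm hDc
    apply hexu m hm
    have h1 : p ^ m • u = p ^ m • u' + p ^ (m + 1) • s := by
      rw [hu', smul_sub]
      have h2 : p ^ m • (p • s) = p ^ (m + 1) • s := by rw [smul_smul, ← pow_succ]
      rw [h2]
      abel
    rw [h1]
    exact dv_add hDc ⟨s, rfl⟩
  obtain ⟨π, hπ⟩ := lemD hp hG u' e he1 (fun m hm => hexu' m hm) hu'e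
  haveI : NeZero (p ^ e) := ⟨pow_ne_zero e (by have := hp.two_le; omega)⟩
  have hπu : π u = 1 + (p : ZMod (p ^ e)) * π s := by
    have h1 : u = u' + p • s := by rw [hu']; abel
    rw [h1, map_add, hπ, map_nsmul, nsmul_eq_mul]
  set ζ : ZMod (p ^ e) := 1 + (p : ZMod (p ^ e)) * π s with hζdef
  have hζunit : IsUnit ζ := by
    apply IsNilpotent.isUnit_one_add
    refine ⟨e, ?_⟩
    rw [mul_pow]
    have h1 : (p : ZMod (p ^ e)) ^ e = 0 := zmod_pow_e_eq_zero p e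
    rw [h1, zero_mul]
  obtain ⟨ω, hω⟩ := hζunit
  obtain ⟨v, hv⟩ := Hle r hrn (H r) ⟨u, hu⟩
  have hv0 : p ^ e • v = 0 := by
    have h1 : p ^ e • v = p ^ (n - r) • (p ^ (H r) • v) := by
      rw [smul_smul, ← pow_add]
      congr 2
      omega
    rw [h1, hv, smul_smul, ← pow_add]
    have h2 : n - r + r = n := by omega
    rw [h2, Hy]
  set dnat : ℕ := ((ω⁻¹ : (ZMod (p ^ e))ˣ) : ZMod (p ^ e)).val with hdnat
  set v' := dnat • v with hv'
  have hMv' : zmultiplesHom G v' ((p ^ e : ℕ) : ℤ) = 0 := by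
    have h0 : ((p ^ e : ℕ) : ℤ) • v' = 0 := by
      rw [natCast_zsmul, hv', smul_comm, hv0, smul_zero]
    simpa [zmultiplesHom_apply] using h0
  set ρ : ZMod (p ^ e) →+ G := ZMod.lift (p ^ e) ⟨zmultiplesHom G v', hMv'⟩ with hρ
  set β : G →+ G := ρ.comp π with hβ
  have hβx : β (p ^ r • x) = p ^ (H r) • v := by
    have h1 : π (p ^ r • x) = ((p ^ (H r) * ζ.val : ℕ) : ZMod (p ^ e)) := by
      rw [← hu, map_nsmul, hπu, nsmul_eq_mul]
      push_cast
      rw [ZMod.natCast_val, ZMod.cast_id]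
    have h3 : (((p ^ (H r) * ζ.val : ℕ) : ℤ) : ZMod (p ^ e))
        = ((p ^ (H r) * ζ.val : ℕ) : ZMod (p ^ e)) := by push_cast; ring
    have h2 : ρ (((p ^ (H r) * ζ.val : ℕ) : ZMod (p ^ e)))
        = ((p ^ (H r) * ζ.val : ℕ) : ℤ) • v' := by
      rw [← h3, hρ, ZMod.lift_coe]
      rfl
    rw [hβ, AddMonoidHom.comp_apply, h1, h2, hv']
    have h4 : ((p ^ (H r) * ζ.val : ℕ) : ℤ) • (dnat • v)
        = ((p ^ (H r) * ζ.val * dnat : ℕ) : ℤ) • v := by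
      rw [natCast_zsmul, natCast_zsmul, smul_smul]
    have h5 : ((p ^ (H r) * ζ.val * dnat : ℕ) : ℤ) • v = ((p ^ (H r) : ℕ) : ℤ) • v := by
      apply smul_congr_zmod (M := p ^ e) hv0
      push_cast
      rw [ZMod.natCast_val, ZMod.cast_id, ZMod.natCast_val, ZMod.cast_id]
      rw [← hω, mul_assoc, Units.mul_inv, mul_one]
    rw [h4, h5, natCast_zsmul]
  set y1 := y - β x with hy1def
  have hy1r : p ^ r • y1 = 0 := by
    rw [hy1def, smul_sub, ← map_nsmul, hβx, hv, sub_self]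
  rcases hPor with hr0 | hPPr
  · -- no gap: y1 = 0, g = β
    refine ⟨β, ?_⟩
    rw [hr0, pow_zero, one_smul] at hy1r
    rw [hy1def] at hy1r
    have := sub_eq_zero.mp hy1r
    exact this.symm
  · obtain ⟨h1r, hrn1, hgap⟩ := hPPr
    have Hfin' : ∀ k, k < r → ∃ m, ¬ Dv p m (p ^ k • x) := fun k hk => Hfin k (by omega)
    have Hle' : ∀ k, k < r → ∀ m, Dv p m (p ^ k • x) → Dv p m (p ^ k • y1) := by
      intro k hk m hd
      have h2 : p ^ k • y1 = p ^ k • y - β (p ^ k • x) := by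
        rw [hy1def, smul_sub, map_nsmul]
      rw [h2]
      exact dv_sub (Hle k (by omega) m hd) (dv_map β hd)
    have Hx' : ∀ c, Dv p c (p ^ (r - 1) • x) → Dv p (c + 2) (p ^ r • x) := by
      intro c hd
      have hcle : c ≤ H (r - 1) := by
        by_contra hc
        push_neg at hc
        exact hHnot (r - 1) (by omega) (dv_mono (by omega) hd)
      exact dv_mono (by omega) (hHdv r hrn)
    obtain ⟨α, hα⟩ := IH r (by omega) x y1 Hfin' Hle' hy1r Hx'
    refine ⟨α + β, ?_⟩
    rw [AddMonoidHom.add_apply, hα, hy1def]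
    abel

end Build
theorem stmt5 {G : Type*} [AddCommGroup G] (p : ℕ) (hp : p.Prime) (hG : IsPGrp p G)
    (x : G) (n : ℕ) (hx : addOrderOf x = p ^ n)
    (hU : ∀ z ∈ zmultiples x, (∀ m : ℕ, ∃ y : G, p ^ m • y = z) → z = 0) :
    InP (zmultiples x) ↔
      ∀ y : G, addOrderOf y = p ^ n →
        ∀ k : ℕ, pHeight p (p ^ k • x) ≤ pHeight p (p ^ k • y) := by
  classical
  have hxmem : x ∈ zmultiples x := mem_zmultiples x
  constructor
  · -- forward direction
    intro hP y hy k
    have hkill : ∀ j : ℤ, j • x = 0 → j • y = 0 := by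
      intro j hj
      have h1 : ((addOrderOf x : ℕ) : ℤ) ∣ j := addOrderOf_dvd_iff_zsmul_eq_zero.mpr hj
      rw [hx, ← hy] at h1
      exact addOrderOf_dvd_iff_zsmul_eq_zero.mp h1
    have hκ : ∀ a : zmultiples x, ∃ j : ℤ, j • x = (a : G) := fun a => mem_zmultiples_iff.mp a.2
    choose κ hκs using hκ
    have hcong : ∀ (a : zmultiples x) (j : ℤ), j • x = (a : G) → κ a • y = j • y := by
      intro a j hj
      have h1 : (κ a - j) • x = 0 := by rw [sub_smul, hκs a, hj, sub_self]
      have h2 := hkill _ h1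
      rw [sub_smul, sub_eq_zero] at h2
      exact h2
    set f : zmultiples x →+ G := AddMonoidHom.mk' (fun a => κ a • y) (by
      intro a b
      have h1 : (κ a + κ b) • x = ((a + b : zmultiples x) : G) := by
        rw [add_smul, hκs a, hκs b]; rfl
      have h2 := hcong (a + b) _ h1
      show κ (a + b) • y = κ a • y + κ b • y
      rw [h2, add_smul]) with hf
    have hfx : f ⟨x, hxmem⟩ = y := by
      have h1 : (1 : ℤ) • x = ((⟨x, hxmem⟩ : zmultiples x) : G) := by rw [one_smul]
      have h2 := hcong _ _ h1
      show κ ⟨x, hxmem⟩ • y = y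
      rw [h2, one_smul]
    have hinj : Function.Injective f := by
      intro a b hab
      have h1 : f (a - b) = 0 := by rw [map_sub, hab, sub_self]
      have h2 : κ (a - b) • y = 0 := h1
      have h3 : ((p ^ n : ℕ) : ℤ) ∣ κ (a - b) := by
        rw [← hy]
        exact addOrderOf_dvd_iff_zsmul_eq_zero.mpr h2
      have h4 : κ (a - b) • x = 0 := by
        rw [← hx] at h3
        exact addOrderOf_dvd_iff_zsmul_eq_zero.mp h3
      have h5 : ((a - b : zmultiples x) : G) = 0 := by rw [← hκs (a - b), h4]
      have h6 : a - b = 0 := Subtype.ext h5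
      rw [sub_eq_zero] at h6
      exact h6
    obtain ⟨g, hg⟩ := hP f hinj
    have hgx : g x = y := by
      have := hg ⟨x, hxmem⟩
      rw [hfx] at this
      exact this
    apply pHeight_le_of_dv
    intro m hd
    obtain ⟨wit, hwit⟩ := hd
    refine ⟨g wit, ?_⟩
    rw [← map_nsmul, hwit, map_nsmul, hgx]
  · -- reverse direction
    intro hUlm f hinj
    set y := f ⟨x, hxmem⟩ with hydef
    have hpnx : p ^ n • x = 0 := by rw [← hx]; exact addOrderOf_nsmul_eq_zero x
    have hhat : (p ^ n • (⟨x, hxmem⟩ : zmultiples x)) = 0 := by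
      apply Subtype.ext
      simpa using hpnx
    have hpny : p ^ n • y = 0 := by
      rw [hydef, ← map_nsmul, hhat, map_zero]
    have hordy : addOrderOf y = p ^ n := by
      rcases Nat.eq_zero_or_pos n with rfl | hn
      · have hx0 : x = 0 := by
          rw [pow_zero] at hx
          exact (AddMonoid.addOrderOf_eq_one_iff).mp hx
        have hy0 : y = 0 := by
          rw [hydef]
          have h0 : (⟨x, hxmem⟩ : zmultiples x) = 0 := Subtype.ext hx0
          rw [h0, map_zero]
        rw [hy0, pow_zero, addOrderOf_zero]
      · have hdvd : addOrderOf y ∣ p ^ n := addOrderOf_dvd_of_nsmul_eq_zero hpny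
        obtain ⟨j, hjn, hjd⟩ := (Nat.dvd_prime_pow hp).mp hdvd
        rcases Nat.lt_or_ge j n with hj | hj
        · exfalso
          have h1 : p ^ (n - 1) • y = 0 := by
            apply addOrderOf_dvd_iff_nsmul_eq_zero.mp
            rw [hjd]
            exact pow_dvd_pow p (by omega)
          have h2 : f (p ^ (n - 1) • ⟨x, hxmem⟩) = 0 := by
            rw [map_nsmul, ← hydef, h1]
          have h3 : (p ^ (n - 1) • (⟨x, hxmem⟩ : zmultiples x)) = 0 := by
            apply hinj
            rw [h2, map_zero]
          have h4 : p ^ (n - 1) • x = 0 := by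
            have := congrArg (Subtype.val) h3
            simpa using this
          have h5 : p ^ n ∣ p ^ (n - 1) := by
            rw [← hx]
            exact addOrderOf_dvd_of_nsmul_eq_zero h4
          have h6 := Nat.le_of_dvd (pow_pos hp.pos _) h5
          have h7 : p ^ (n - 1) < p ^ n := Nat.pow_lt_pow_right hp.one_lt (by omega)
          omega
        · have hjeq : j = n := by omega
          rw [hjd, hjeq]
    have hUlm2 := hUlm y hordy
    have Hle : ∀ k, k < n → ∀ m, Dv p m (p ^ k • x) → Dv p m (p ^ k • y) :=
      fun k _ m hd => dv_of_pHeight_le (hUlm2 k) hd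
    have Hfin : ∀ k, k < n → ∃ m, ¬ Dv p m (p ^ k • x) := by
      intro k hk
      by_contra hc
      push_neg at hc
      have h1 : p ^ k • x = 0 := by
        apply hU (p ^ k • x)
        · refine mem_zmultiples_iff.mpr ⟨(p ^ k : ℕ), ?_⟩
          rw [natCast_zsmul]
        · exact fun m => hc m
      have h2 : p ^ n ∣ p ^ k := by
        rw [← hx]
        exact addOrderOf_dvd_of_nsmul_eq_zero h1
      have h3 := Nat.le_of_dvd (pow_pos hp.pos _) h2
      have h4 : p ^ k < p ^ n := Nat.pow_lt_pow_right hp.one_lt hk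
      omega
    have Hx2 : ∀ c, Dv p c (p ^ (n - 1) • x) → Dv p (c + 2) (p ^ n • x) := by
      intro c _
      rw [hpnx]
      exact dv_zero _
    obtain ⟨g, hg⟩ := buildHom hp hG n x y Hfin Hle hpny Hx2
    refine ⟨g, ?_⟩
    intro a
    obtain ⟨j, hj⟩ := mem_zmultiples_iff.mp a.2
    have h1 : (a : G) = j • x := hj.symm
    have h2 : a = j • (⟨x, hxmem⟩ : zmultiples x) := by
      apply Subtype.ext
      simpa using h1
    calc g (a : G) = g (j • x) := by rw [← h1]
      _ = j • g x := map_zsmul g j x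
      _ = j • y := by rw [hg]
      _ = j • f ⟨x, hxmem⟩ := by rw [hydef]
      _ = f (j • ⟨x, hxmem⟩) := (map_zsmul f j _).symm
      _ = f a := by rw [← h2]
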